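/- Let (X,Y) be jointly Gaussian as above, A, K as in the optimal transport EnKF, and define the OT-EnKF update X₁ = m_x + A(X₀ − m_x) + K(y − m_y) for X₀ ∼ N(m_x, Σ_x), and the perturbed-observation EnKF update X₁' = X₀ + K(y − Y₀) where (X₀, Y₀) ∼ N((m_x,m_y), Σ) jointly Gaussian with covariance Σ. Then X₁ and X₁' have the same mean m_x + K(y − m_y) and the same covariance Σ_x − Σ_xy Σ_y^{-1} Σ_xyᵀ. -/

import Mathlib

open Matrix MeasureTheory

private lemma mulL2 {Ω : Type*} [MeasurableSpace Ω] {P : Measure Ω} {f g : Ω → ℝ}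
    (hf : MemLp f 2 P) (hg : MemLp g 2 P) : Integrable (fun ω => f ω * g ω) P := by
  have h : MemLp (f • g) 1 P := hg.smul hf (hpqr := ⟨by
    rw [inv_one]; exact ENNReal.inv_two_add_inv_two⟩)
  rw [memLp_one_iff_integrable] at h
  exact h

private lemma int_mul_sum {Ω ι : Type*} [Fintype ι] [MeasurableSpace Ω] {P : Measure Ω}
    {f : Ω → ℝ} {g : ι → Ω → ℝ} (b : ι → ℝ)
    (hf : MemLp f 2 P) (hg : ∀ l, MemLp (g l) 2 P) :
    ∫ ω, f ω * (∑ l, b l * g l ω) ∂P = ∑ l, b l * ∫ ω, f ω * g l ω ∂P := by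
  have h1 : ∀ ω, f ω * (∑ l, b l * g l ω) = ∑ l, b l * (f ω * g l ω) := by
    intro ω; rw [Finset.mul_sum]; exact Finset.sum_congr rfl fun l _ => by ring
  simp_rw [h1]
  rw [integral_finset_sum _ fun l _ => (mulL2 hf (hg l)).const_mul _]
  exact Finset.sum_congr rfl fun l _ => integral_const_mul _ _

private lemma int_sum_mul {Ω ι : Type*} [Fintype ι] [MeasurableSpace Ω] {P : Measure Ω}
    {f : ι → Ω → ℝ} {g : Ω → ℝ} (a : ι → ℝ)
    (hf : ∀ k, MemLp (f k) 2 P) (hg : MemLp g 2 P) :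
    ∫ ω, (∑ k, a k * f k ω) * g ω ∂P = ∑ k, a k * ∫ ω, f k ω * g ω ∂P := by
  have h1 : ∀ ω, (∑ k, a k * f k ω) * g ω = ∑ k, a k * (f k ω * g ω) := by
    intro ω; rw [Finset.sum_mul]; exact Finset.sum_congr rfl fun k _ => by ring
  simp_rw [h1]
  rw [integral_finset_sum _ fun k _ => (mulL2 (hf k) hg).const_mul _]
  exact Finset.sum_congr rfl fun k _ => integral_const_mul _ _

private lemma memℒp_sum_mul {Ω ι : Type*} [Fintype ι] [MeasurableSpace Ω] {P : Measure Ω}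
    {g : ι → Ω → ℝ} (b : ι → ℝ) (hg : ∀ l, MemLp (g l) 2 P) :
    MemLp (fun ω => ∑ l, b l * g l ω) 2 P := by
  have h := memLp_finset_sum' (μ := P) (p := 2) Finset.univ
    (f := fun l ω => b l * g l ω) (fun l _ => (hg l).const_mul (b l))
  have e : (fun ω => ∑ l, b l * g l ω) = ∑ l, fun ω => b l * g l ω := by
    ext ω; simp
  rw [e]; exact h

private lemma int_sum_mul_sum {Ω ι κ : Type*} [Fintype ι] [Fintype κ] [MeasurableSpace Ω]
    {P : Measure Ω} {f : ι → Ω → ℝ} {g : κ → Ω → ℝ} (a : ι → ℝ) (b : κ → ℝ)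
    (hf : ∀ k, MemLp (f k) 2 P) (hg : ∀ l, MemLp (g l) 2 P) :
    ∫ ω, (∑ k, a k * f k ω) * (∑ l, b l * g l ω) ∂P
      = ∑ k, ∑ l, a k * b l * ∫ ω, f k ω * g l ω ∂P := by
  rw [int_sum_mul a hf (memℒp_sum_mul b hg)]
  refine Finset.sum_congr rfl fun k _ => ?_
  rw [int_mul_sum b (hf k) hg, Finset.mul_sum]
  exact Finset.sum_congr rfl fun l _ => by ring

theorem stmt8 {n m : ℕ} {Ω : Type*} [MeasurableSpace Ω]
    (P : Measure Ω) [IsProbabilityMeasure P]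
    (X0 : Ω → Fin n → ℝ) (Y0 : Ω → Fin m → ℝ)
    (mx : Fin n → ℝ) (my : Fin m → ℝ)
    (Sx : Matrix (Fin n) (Fin n) ℝ) (Sy : Matrix (Fin m) (Fin m) ℝ)
    (Sxy : Matrix (Fin n) (Fin m) ℝ)
    (hSx : Sx.PosDef) (hSy : Sy.PosDef)
    (hblock : (Matrix.fromBlocks Sx Sxy Sxyᵀ Sy).PosDef)
    (hX0L2 : ∀ i, MemLp (fun ω => X0 ω i) 2 P)
    (hY0L2 : ∀ j, MemLp (fun ω => Y0 ω j) 2 P)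
    (hmx : ∀ i, ∫ ω, X0 ω i ∂P = mx i)
    (hmy : ∀ j, ∫ ω, Y0 ω j ∂P = my j)
    (hcovx : ∀ i j, ∫ ω, (X0 ω i - mx i) * (X0 ω j - mx j) ∂P = Sx i j)
    (hcovy : ∀ i j, ∫ ω, (Y0 ω i - my i) * (Y0 ω j - my j) ∂P = Sy i j)
    (hcovxy : ∀ i j, ∫ ω, (X0 ω i - mx i) * (Y0 ω j - my j) ∂P = Sxy i j)
    (K : Matrix (Fin n) (Fin m) ℝ) (hK : K = Sxy * Sy⁻¹)
    (A : Matrix (Fin n) (Fin n) ℝ) (hA : A.PosDef)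
    (hAS : A * Sx * A = Sx - K * Sy * Kᵀ)
    (y : Fin m → ℝ)
    (X1 X1' : Ω → Fin n → ℝ)
    (hX1 : ∀ ω, X1 ω = mx + A.mulVec (X0 ω - mx) + K.mulVec (y - my))
    (hX1' : ∀ ω, X1' ω = X0 ω + K.mulVec (y - Y0 ω)) :
    (∀ i, ∫ ω, X1 ω i ∂P = (mx + K.mulVec (y - my)) i) ∧
    (∀ i, ∫ ω, X1' ω i ∂P = (mx + K.mulVec (y - my)) i) ∧
    (∀ i j, ∫ ω, (X1 ω i - (mx + K.mulVec (y - my)) i) *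
        (X1 ω j - (mx + K.mulVec (y - my)) j) ∂P = (Sx - Sxy * Sy⁻¹ * Sxyᵀ) i j) ∧
    (∀ i j, ∫ ω, (X1' ω i - (mx + K.mulVec (y - my)) i) *
        (X1' ω j - (mx + K.mulVec (y - my)) j) ∂P = (Sx - Sxy * Sy⁻¹ * Sxyᵀ) i j) := by
  -- matrix algebra
  have hSyd : IsUnit Sy.det := isUnit_iff_ne_zero.mpr hSy.det_pos.ne'
  have hSyt : Syᵀ = Sy := hSy.isHermitian.eq
  have hAt : Aᵀ = A := hA.isHermitian.eq
  have hKT : Kᵀ = Sy⁻¹ * Sxyᵀ := by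
    rw [hK, Matrix.transpose_mul, Matrix.transpose_nonsing_inv, hSyt]
  have hKSy : K * Sy = Sxy := by
    rw [hK, Matrix.mul_assoc, Matrix.nonsing_inv_mul Sy hSyd, Matrix.mul_one]
  have hKSK : K * Sy * Kᵀ = Sxy * Sy⁻¹ * Sxyᵀ := by
    rw [hKSy, hKT, ← Matrix.mul_assoc]
  have hSxyKT : Sxy * Kᵀ = Sxy * Sy⁻¹ * Sxyᵀ := by rw [hKT, ← Matrix.mul_assoc]
  have hKSxyT : K * Sxyᵀ = Sxy * Sy⁻¹ * Sxyᵀ := by rw [hK]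
  have hASA : A * Sx * Aᵀ = Sx - Sxy * Sy⁻¹ * Sxyᵀ := by rw [hAt, hAS, hKSK]
  -- analytic basics
  have hdX : ∀ i, MemLp (fun ω => X0 ω i - mx i) 2 P :=
    fun i => (hX0L2 i).sub (memLp_const _)
  have hdY : ∀ j, MemLp (fun ω => Y0 ω j - my j) 2 P :=
    fun j => (hY0L2 j).sub (memLp_const _)
  have hintdX : ∀ i, ∫ ω, (X0 ω i - mx i) ∂P = 0 := by
    intro i
    rw [integral_sub ((hX0L2 i).integrable one_le_two) (integrable_const _),
      hmx, integral_const]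
    simp
  have hintdY : ∀ j, ∫ ω, (Y0 ω j - my j) ∂P = 0 := by
    intro j
    rw [integral_sub ((hY0L2 j).integrable one_le_two) (integrable_const _),
      hmy, integral_const]
    simp
  -- centered expressions
  have hd1 : ∀ ω i, X1 ω i - (mx + K.mulVec (y - my)) i
      = ∑ k, A i k * (X0 ω k - mx k) := by
    intro ω i
    rw [hX1 ω]
    simp only [Pi.add_apply, Pi.sub_apply, Matrix.mulVec, dotProduct]
    ring
  have hd1' : ∀ ω i, X1' ω i - (mx + K.mulVec (y - my)) i
      = (X0 ω i - mx i) - ∑ k, K i k * (Y0 ω k - my k) := by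
    intro ω i
    rw [hX1' ω]
    simp only [Pi.add_apply, Pi.sub_apply, Matrix.mulVec, dotProduct, mul_sub,
      Finset.sum_sub_distrib]
    ring
  refine ⟨?_, ?_, ?_, ?_⟩
  · -- mean of X1
    intro i
    have e1 : ∀ ω, X1 ω i = (∑ k, A i k * (X0 ω k - mx k)) + (mx + K.mulVec (y - my)) i :=
      fun ω => by have := hd1 ω i; linarith
    simp_rw [e1]
    rw [integral_add (integrable_finset_sum _ fun k _ =>
        ((hdX k).integrable one_le_two).const_mul _) (integrable_const _),
      integral_finset_sum _ fun k _ => ((hdX k).integrable one_le_two).const_mul _,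
      integral_const]
    simp [integral_const_mul, hintdX]
  · -- mean of X1'
    intro i
    have e1 : ∀ ω, X1' ω i = ((X0 ω i - mx i) - ∑ k, K i k * (Y0 ω k - my k))
        + (mx + K.mulVec (y - my)) i :=
      fun ω => by have := hd1' ω i; linarith
    simp_rw [e1]
    have Isum : Integrable (fun ω => ∑ k, K i k * (Y0 ω k - my k)) P :=
      integrable_finset_sum _ fun k _ => ((hdY k).integrable one_le_two).const_mul _
    have I1 : Integrable (fun ω => X0 ω i - mx i - ∑ k, K i k * (Y0 ω k - my k)) P :=
      ((hdX i).integrable one_le_two).sub Isum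
    rw [integral_add I1 (integrable_const _),
      integral_sub ((hdX i).integrable one_le_two) Isum,
      integral_finset_sum _ fun k _ => ((hdY k).integrable one_le_two).const_mul _,
      integral_const, hintdX]
    simp [integral_const_mul, hintdY]
  · -- covariance of X1
    intro i j
    simp_rw [hd1]
    rw [int_sum_mul_sum (fun k => A i k) (fun l => A j l) hdX hdX]
    simp_rw [hcovx]
    rw [← hASA]
    simp only [Matrix.mul_apply, Matrix.transpose_apply, Finset.sum_mul]
    rw [Finset.sum_comm]
    exact Finset.sum_congr rfl fun k _ => Finset.sum_congr rfl fun l _ => by ring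
  · -- covariance of X1'
    intro i j
    simp_rw [hd1']
    have expand : ∀ ω, ((X0 ω i - mx i) - ∑ k, K i k * (Y0 ω k - my k))
        * ((X0 ω j - mx j) - ∑ l, K j l * (Y0 ω l - my l))
        = (X0 ω i - mx i) * (X0 ω j - mx j)
          - (X0 ω i - mx i) * (∑ l, K j l * (Y0 ω l - my l))
          - (∑ k, K i k * (Y0 ω k - my k)) * (X0 ω j - mx j)
          + (∑ k, K i k * (Y0 ω k - my k)) * (∑ l, K j l * (Y0 ω l - my l)) := by
      intro ω; ring
    simp_rw [expand]
    have Iac : Integrable (fun ω => (X0 ω i - mx i) * (X0 ω j - mx j)) P :=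
      mulL2 (hdX i) (hdX j)
    have Iad : Integrable
        (fun ω => (X0 ω i - mx i) * (∑ l, K j l * (Y0 ω l - my l))) P :=
      mulL2 (hdX i) (memℒp_sum_mul _ hdY)
    have Ibc : Integrable
        (fun ω => (∑ k, K i k * (Y0 ω k - my k)) * (X0 ω j - mx j)) P :=
      mulL2 (memℒp_sum_mul _ hdY) (hdX j)
    have Ibd : Integrable
        (fun ω => (∑ k, K i k * (Y0 ω k - my k)) * (∑ l, K j l * (Y0 ω l - my l))) P :=
      mulL2 (memℒp_sum_mul _ hdY) (memℒp_sum_mul _ hdY)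
    have I0 : Integrable (fun ω => (X0 ω i - mx i) * (X0 ω j - mx j)
        - (X0 ω i - mx i) * (∑ l, K j l * (Y0 ω l - my l))) P := Iac.sub Iad
    have I1 : Integrable (fun ω => (X0 ω i - mx i) * (X0 ω j - mx j)
        - (X0 ω i - mx i) * (∑ l, K j l * (Y0 ω l - my l))
        - (∑ k, K i k * (Y0 ω k - my k)) * (X0 ω j - mx j)) P := I0.sub Ibc
    rw [integral_add I1 Ibd, integral_sub I0 Ibc, integral_sub Iac Iad]
    have T2 : ∫ ω, (X0 ω i - mx i) * (∑ l, K j l * (Y0 ω l - my l)) ∂P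
        = (Sxy * Kᵀ) i j := by
      rw [int_mul_sum (fun l => K j l) (hdX i) hdY]
      simp_rw [hcovxy]
      simp [Matrix.mul_apply, Matrix.transpose_apply, mul_comm]
    have T3 : ∫ ω, (∑ k, K i k * (Y0 ω k - my k)) * (X0 ω j - mx j) ∂P
        = (K * Sxyᵀ) i j := by
      rw [int_sum_mul (fun k => K i k) hdY (hdX j)]
      have : ∀ k, ∫ ω, (Y0 ω k - my k) * (X0 ω j - mx j) ∂P = Sxy j k := by
        intro k; rw [← hcovxy j k]
        exact integral_congr_ae (Filter.Eventually.of_forall fun ω => by ring)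
      simp_rw [this]
      simp [Matrix.mul_apply, Matrix.transpose_apply]
    have T4 : ∫ ω, (∑ k, K i k * (Y0 ω k - my k)) * (∑ l, K j l * (Y0 ω l - my l)) ∂P
        = (K * Sy * Kᵀ) i j := by
      rw [int_sum_mul_sum (fun k => K i k) (fun l => K j l) hdY hdY]
      simp_rw [hcovy]
      simp only [Matrix.mul_apply, Matrix.transpose_apply, Finset.sum_mul]
      rw [Finset.sum_comm]
      exact Finset.sum_congr rfl fun k _ => Finset.sum_congr rfl fun l _ => by ring
    rw [hcovx, T2, T3, T4, hSxyKT, hKSxyT, hKSK]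
    simp [Matrix.sub_apply]
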